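/- Let q = (q₁, q₂, q₃) be a triple of real polynomials in x₁, x₂, x₃. Then x × q = 0 identically (i.e., q₁x₂ = q₂x₁, q₂x₃ = q₃x₂, q₃x₁ = q₁x₃ as polynomial identities) if and only if there exists a real polynomial p with q = x p, i.e., qᵢ = xᵢ p for i = 1, 2, 3; moreover, if each qᵢ has total degree at most m and q ≠ 0, then p has total degree at most m − 1. -/

import Mathlib

open MvPolynomial

noncomputable section

/-- The pointwise cross product `x × q` of the identity vector field `x = (x₁,x₂,x₃)`
with a polynomial vector field `q`. -/
def crossX (q : Fin 3 → MvPolynomial (Fin 3) ℝ) : Fin 3 → MvPolynomial (Fin 3) ℝ :=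
  ![X 1 * q 2 - X 2 * q 1, X 2 * q 0 - X 0 * q 2, X 0 * q 1 - X 1 * q 0]

/-- For a triple `q` of real polynomials in three variables,
`x × q = 0` identically iff `q = x p` for some polynomial `p`; moreover, if each `qᵢ`
has total degree at most `m` and `q ≠ 0`, then `p` has total degree at most `m − 1`. -/
theorem crossX_eq_zero_iff (q : Fin 3 → MvPolynomial (Fin 3) ℝ) :
    ((∀ i, crossX q i = 0) ↔ ∃ p : MvPolynomial (Fin 3) ℝ, ∀ i, q i = X i * p) ∧
    (∀ (m : ℕ) (p : MvPolynomial (Fin 3) ℝ), (∀ i, q i = X i * p) →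
      (∀ i, (q i).totalDegree ≤ m) → q ≠ 0 →
      (p.totalDegree : ℤ) ≤ (m : ℤ) - 1) := by
  constructor
  · constructor
    · intro h
      have h0 := h 0
      have h1 := h 1
      have h2 := h 2
      simp only [crossX, Matrix.cons_val_zero, Matrix.cons_val_one, Matrix.head_cons,
        Matrix.cons_val_two, Matrix.tail_cons, sub_eq_zero] at h0 h1 h2
      -- h2 : X 0 * q 1 = X 1 * q 0
      have hdvd : (X 0 : MvPolynomial (Fin 3) ℝ) ∣ X 1 * q 0 := ⟨q 1, h2.symm⟩
      have hnd : ¬ (X 0 : MvPolynomial (Fin 3) ℝ) ∣ X 1 := by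
        rw [X_dvd_X]; decide
      have hprime : Prime (X 0 : MvPolynomial (Fin 3) ℝ) := by
        rw [← MulEquiv.prime_iff (finSuccEquiv ℝ 2).toMulEquiv]
        simpa [finSuccEquiv_X_zero] using Polynomial.prime_X (R := MvPolynomial (Fin 2) ℝ)
      obtain ⟨p, hp⟩ := (hprime.dvd_mul.mp hdvd).resolve_left hnd
      have hX0 : (X 0 : MvPolynomial (Fin 3) ℝ) ≠ 0 := X_ne_zero 0
      have hq1 : q 1 = X 1 * p := by
        apply mul_left_cancel₀ hX0
        rw [h2, hp]; ring
      have hq2 : q 2 = X 2 * p := by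
        apply mul_left_cancel₀ hX0
        rw [← h1, hp]; ring
      refine ⟨p, fun i => ?_⟩
      fin_cases i
      · exact hp
      · exact hq1
      · exact hq2
    · rintro ⟨p, hp⟩ i
      fin_cases i <;> simp [crossX, hp] <;> ring_nf
  · intro m p hp hdeg hq
    have hpne : p ≠ 0 := by
      intro h0
      apply hq
      funext i
      rw [hp i, h0, mul_zero]; rfl
    obtain ⟨d, hd, hdeq⟩ := Finset.exists_mem_eq_sup p.support
      (support_nonempty.mpr hpne) (fun s => s.sum fun _ e => e)
    have hcoeff : coeff (Finsupp.single (0 : Fin 3) 1 + d) (X 0 * p) ≠ 0 := by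
      rw [coeff_X_mul]
      exact mem_support_iff.mp hd
    have hle : ((Finsupp.single (0 : Fin 3) 1 + d).sum fun _ e => e) ≤ (X 0 * p).totalDegree :=
      le_totalDegree (mem_support_iff.mpr hcoeff)
    have hsum : ((Finsupp.single (0 : Fin 3) 1 + d).sum fun _ e => e)
        = 1 + (d.sum fun _ e => e) := by
      rw [Finsupp.sum_add_index (by simp) (by intros; rfl), Finsupp.sum_single_index rfl]
    have h1 : 1 + p.totalDegree ≤ m := by
      calc 1 + p.totalDegree = 1 + (d.sum fun _ e => e) := by rw [totalDegree, hdeq]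
        _ ≤ (X 0 * p).totalDegree := by rw [← hsum]; exact hle
        _ = (q 0).totalDegree := by rw [hp 0]
        _ ≤ m := hdeg 0
    omega
end
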